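/- arXiv:math/0104283 — 2 statements merged into one kernel-verified Lean document; each statement's English description precedes it below -/
import Mathlib

section
/- Let C be a finite subset of ℤ^s and ⪯ an admissible order on ℕ^s, extended to the group ℤ^s by translation invariance (γ ⪯ μ iff γ + δ ⪯ μ + δ whenever all terms lie in ℕ^s after a common translation). If every element of C is strictly ⪯-less than 0, then there exists a vector w ∈ ℕ^s with all entries strictly positive such that ⟨w, α⟩ < 0 for every α ∈ C. -/
/-- An admissible order on ℕ^s. -/
def IsAdmissibleOrder {s : ℕ} (r : (Fin s → ℕ) → (Fin s → ℕ) → Prop) : Prop :=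
  IsLinearOrder (Fin s → ℕ) r ∧
    (∀ α β γ : Fin s → ℕ, r α β → r (α + γ) (β + γ)) ∧
    (∀ α : Fin s → ℕ, r 0 α)

/-- The translation-invariant extension of an admissible order on ℕ^s to ℤ^s:
γ ⪯ μ iff after a common translation by a natural vector both land in ℕ^s
and are related by r there. -/
def extOrder {s : ℕ} (r : (Fin s → ℕ) → (Fin s → ℕ) → Prop)
    (γ μ : Fin s → ℤ) : Prop :=
  ∃ a b d : Fin s → ℕ, (∀ i, γ i + (d i : ℤ) = (a i : ℤ)) ∧
    (∀ i, μ i + (d i : ℤ) = (b i : ℤ)) ∧ r a b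

namespace AuxOrd

variable {s : ℕ} {r : (Fin s → ℕ) → (Fin s → ℕ) → Prop}

/-- natural vector obtained by shifting `γ` by `d`. -/
def natOf (γ : Fin s → ℤ) (d : Fin s → ℕ) : Fin s → ℕ := fun i => (γ i + d i).toNat

lemma natOf_spec {γ : Fin s → ℤ} {d : Fin s → ℕ} (h : ∀ i, 0 ≤ γ i + d i) (i : Fin s) :
    ((natOf γ d i : ℤ)) = γ i + d i := Int.toNat_of_nonneg (h i)

lemma r_cancel (hr : IsAdmissibleOrder r) {α β δ : Fin s → ℕ} (h : r (α + δ) (β + δ)) :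
    r α β := by
  haveI := hr.1
  rcases total_of r α β with h' | h'
  · exact h'
  · have h2 : r (β + δ) (α + δ) := hr.2.1 _ _ _ h'
    have h3 : α + δ = β + δ := antisymm_of r h h2
    have : α = β := by
      funext i
      have := congrFun h3 i
      simpa using this
    subst this
    exact h'

lemma ext_iff_d (hr : IsAdmissibleOrder r) {γ μ : Fin s → ℤ} {d : Fin s → ℕ}
    (h1 : ∀ i, 0 ≤ γ i + d i) (h2 : ∀ i, 0 ≤ μ i + d i) :
    extOrder r γ μ ↔ r (natOf γ d) (natOf μ d) := by
  constructor
  · rintro ⟨a, b, e, ha, hb, hab⟩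
    have key1 : a + d = natOf γ d + e := by
      funext i
      have : ((a i + d i : ℕ) : ℤ) = ((natOf γ d i + e i : ℕ) : ℤ) := by
        push_cast
        rw [natOf_spec h1 i, ← ha i]; ring
      exact_mod_cast this
    have key2 : b + d = natOf μ d + e := by
      funext i
      have : ((b i + d i : ℕ) : ℤ) = ((natOf μ d i + e i : ℕ) : ℤ) := by
        push_cast
        rw [natOf_spec h2 i, ← hb i]; ring
      exact_mod_cast this
    have := hr.2.1 _ _ d hab
    rw [key1, key2] at this
    exact r_cancel hr this
  · intro h
    exact ⟨natOf γ d, natOf μ d, d, fun i => (natOf_spec h1 i).symm,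
      fun i => (natOf_spec h2 i).symm, h⟩

/-- A shift making two vectors nonnegative. -/
def dd (γ μ : Fin s → ℤ) : Fin s → ℕ := fun i => (-γ i).toNat + (-μ i).toNat

lemma dd_left (γ μ : Fin s → ℤ) : ∀ i, 0 ≤ γ i + dd γ μ i := by
  intro i
  have h1 : -γ i ≤ ((-γ i).toNat : ℤ) := Int.self_le_toNat _
  have h2 : (0:ℤ) ≤ (-μ i).toNat := Int.natCast_nonneg _
  simp only [dd]; push_cast; linarith

lemma dd_right (γ μ : Fin s → ℤ) : ∀ i, 0 ≤ μ i + dd γ μ i := by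
  intro i
  have h1 : -μ i ≤ ((-μ i).toNat : ℤ) := Int.self_le_toNat _
  have h2 : (0:ℤ) ≤ (-γ i).toNat := Int.natCast_nonneg _
  simp only [dd]; push_cast; linarith

lemma ext_refl (hr : IsAdmissibleOrder r) (γ : Fin s → ℤ) : extOrder r γ γ := by
  haveI := hr.1
  exact (ext_iff_d hr (dd_left γ γ) (dd_right γ γ)).2 (refl_of r _)

lemma ext_total (hr : IsAdmissibleOrder r) (γ μ : Fin s → ℤ) :
    extOrder r γ μ ∨ extOrder r μ γ := by
  haveI := hr.1
  rcases total_of r (natOf γ (dd γ μ)) (natOf μ (dd γ μ)) with h | h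
  · exact Or.inl ((ext_iff_d hr (dd_left γ μ) (dd_right γ μ)).2 h)
  · exact Or.inr ((ext_iff_d hr (dd_right γ μ) (dd_left γ μ)).2 h)

lemma ext_trans (hr : IsAdmissibleOrder r) {a b c : Fin s → ℤ}
    (h1 : extOrder r a b) (h2 : extOrder r b c) : extOrder r a c := by
  haveI := hr.1
  set D : Fin s → ℕ := fun i => dd a b i + dd b c i with hD
  have hDa : ∀ i, 0 ≤ a i + D i := fun i => by
    have := dd_left a b i; have : (0:ℤ) ≤ (dd b c i : ℤ) := Int.natCast_nonneg _
    have := dd_left a b i; simp only [hD]; push_cast; linarith [dd_left a b i, Int.natCast_nonneg (dd b c i)]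
  have hDb : ∀ i, 0 ≤ b i + D i := fun i => by
    simp only [hD]; push_cast; linarith [dd_right a b i, Int.natCast_nonneg (dd b c i)]
  have hDc : ∀ i, 0 ≤ c i + D i := fun i => by
    simp only [hD]; push_cast; linarith [dd_right b c i, Int.natCast_nonneg (dd a b i)]
  have t1 := (ext_iff_d hr hDa hDb).1 h1
  have t2 := (ext_iff_d hr hDb hDc).1 h2
  exact (ext_iff_d hr hDa hDc).2 (trans_of r t1 t2)

lemma ext_antisymm (hr : IsAdmissibleOrder r) {a b : Fin s → ℤ}
    (h1 : extOrder r a b) (h2 : extOrder r b a) : a = b := by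
  haveI := hr.1
  have t1 := (ext_iff_d hr (dd_left a b) (dd_right a b)).1 h1
  have t2 := (ext_iff_d hr (dd_right a b) (dd_left a b)).1 h2
  have h3 : natOf a (dd a b) = natOf b (dd a b) := antisymm_of r t1 t2
  funext i
  have := congrFun h3 i
  have e1 := natOf_spec (dd_left a b) i
  have e2 := natOf_spec (dd_right a b) i
  rw [this] at e1
  omega

lemma ext_add (hr : IsAdmissibleOrder r) {a b : Fin s → ℤ} (ν : Fin s → ℤ)
    (h : extOrder r a b) : extOrder r (a + ν) (b + ν) := by
  haveI := hr.1
  set d := dd a b with hd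
  set d' : Fin s → ℕ := fun i => d i + (-ν i).toNat with hd'
  have hν : ∀ i, 0 ≤ ν i + ((-ν i).toNat : ℤ) := fun i => by
    have := Int.self_le_toNat (-ν i); linarith
  have hA : ∀ i, 0 ≤ (a + ν) i + d' i := fun i => by
    simp only [hd', Pi.add_apply]; push_cast
    linarith [dd_left a b i, hν i]
  have hB : ∀ i, 0 ≤ (b + ν) i + d' i := fun i => by
    simp only [hd', Pi.add_apply]; push_cast
    linarith [dd_right a b i, hν i]
  set g : Fin s → ℕ := fun i => (ν i + (-ν i).toNat).toNat with hg
  have keyA : natOf (a + ν) d' = natOf a d + g := by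
    funext i
    have : ((natOf (a+ν) d' i : ℕ) : ℤ) = ((natOf a d i + g i : ℕ) : ℤ) := by
      push_cast
      rw [natOf_spec hA i, natOf_spec (dd_left a b) i, hg]
      simp only [Pi.add_apply, hd']
      rw [Int.toNat_of_nonneg (hν i)]
      push_cast; ring
    exact_mod_cast this
  have keyB : natOf (b + ν) d' = natOf b d + g := by
    funext i
    have : ((natOf (b+ν) d' i : ℕ) : ℤ) = ((natOf b d i + g i : ℕ) : ℤ) := by
      push_cast
      rw [natOf_spec hB i, natOf_spec (dd_right a b) i, hg]
      simp only [Pi.add_apply, hd']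
      rw [Int.toNat_of_nonneg (hν i)]
      push_cast; ring
    exact_mod_cast this
  have t := (ext_iff_d hr (dd_left a b) (dd_right a b)).1 h
  have := hr.2.1 _ _ g t
  rw [← keyA, ← keyB] at this
  exact (ext_iff_d hr hA hB).2 this

end AuxOrd

namespace AuxOrd
variable {s : ℕ} {r : (Fin s → ℕ) → (Fin s → ℕ) → Prop}

/-- nonpositive for the extended order -/
def NP (r : (Fin s → ℕ) → (Fin s → ℕ) → Prop) (v : Fin s → ℤ) : Prop := extOrder r v 0

/-- strictly negative for the extended order -/
def SN (r : (Fin s → ℕ) → (Fin s → ℕ) → Prop) (v : Fin s → ℤ) : Prop :=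
  extOrder r v 0 ∧ ¬ extOrder r 0 v

lemma np_add (hr : IsAdmissibleOrder r) {a b : Fin s → ℤ} (ha : NP r a) (hb : NP r b) :
    NP r (a + b) := by
  have h1 : extOrder r (a + b) (0 + b) := ext_add hr b ha
  rw [zero_add] at h1
  exact ext_trans hr h1 hb

lemma sn_add_np (hr : IsAdmissibleOrder r) {a b : Fin s → ℤ} (ha : SN r a) (hb : NP r b) :
    SN r (a + b) := by
  refine ⟨np_add hr ha.1 hb, fun hcon => ?_⟩
  have h1 : extOrder r (0 + -b) (a + b + -b) := ext_add hr (-b) hcon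
  rw [zero_add, add_neg_cancel_right] at h1
  have h2 : extOrder r (-b) 0 := ext_trans hr h1 ha.1
  have h3 : extOrder r (-b + b) (0 + b) := ext_add hr b h2
  rw [neg_add_cancel, zero_add] at h3
  have hb0 : b = 0 := ext_antisymm hr hb h3
  rw [hb0, add_zero] at hcon
  exact ha.2 hcon

lemma np_zero (hr : IsAdmissibleOrder r) : NP r (0 : Fin s → ℤ) := ext_refl hr 0

lemma np_smul (hr : IsAdmissibleOrder r) {a : Fin s → ℤ} (ha : NP r a) (n : ℕ) :
    NP r (n • a) := by
  induction n with
  | zero => simpa using np_zero hr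
  | succ n ih =>
    have : (n + 1) • a = a + n • a := by rw [add_smul, one_smul, add_comm]
    rw [this]
    exact np_add hr ha ih

lemma sn_smul (hr : IsAdmissibleOrder r) {a : Fin s → ℤ} (ha : SN r a) {n : ℕ} (hn : 0 < n) :
    SN r (n • a) := by
  obtain ⟨m, rfl⟩ : ∃ m, n = m + 1 := ⟨n - 1, by omega⟩
  have : (m + 1) • a = a + m • a := by rw [add_smul, one_smul, add_comm]
  rw [this]
  exact sn_add_np hr ha (np_smul hr ha.1 m)

lemma not_sn_zero (hr : IsAdmissibleOrder r) : ¬ SN r (0 : Fin s → ℤ) := fun h => h.2 (ext_refl hr 0)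

lemma np_sum (hr : IsAdmissibleOrder r) {ι : Type*} (S : Finset ι) (f : ι → Fin s → ℤ)
    (h : ∀ x ∈ S, NP r (f x)) : NP r (∑ x ∈ S, f x) := by
  classical
  induction S using Finset.induction with
  | empty => simpa using np_zero hr
  | insert _ _ hx ih =>
    rw [Finset.sum_insert hx]
    exact np_add hr (h _ (Finset.mem_insert_self _ _))
      (ih fun x hxs => h x (Finset.mem_insert_of_mem hxs))

/-- Sum of natural multiples of strictly negative vectors, with some positive multiplicity,
is strictly negative.  -/
lemma sn_sum (hr : IsAdmissibleOrder r) {ι : Type*} (S : Finset ι) (f : ι → Fin s → ℤ)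
    (n : ι → ℕ) (h : ∀ x ∈ S, SN r (f x)) (hex : ∃ x ∈ S, n x ≠ 0) :
    SN r (∑ x ∈ S, n x • f x) := by
  classical
  obtain ⟨x₀, hx₀S, hx₀⟩ := hex
  rw [← Finset.add_sum_erase _ _ hx₀S]
  refine sn_add_np hr (sn_smul hr (h _ hx₀S) (Nat.pos_of_ne_zero hx₀)) ?_
  exact np_sum hr _ _ fun x hx =>
    np_smul hr (h x (Finset.mem_of_mem_erase hx)).1 _

end AuxOrd

namespace AuxSpan

/-- coordinatewise cast of a rational vector to a real vector -/
def qr {ι : Type*} (q : ι → ℚ) : ι → ℝ := fun t => (q t : ℝ)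

lemma sum_single_mul {ι : Type*} [Fintype ι] [DecidableEq ι] (t₀ : ι) (g : ι → ℚ) :
    ∑ t, (Pi.single t₀ 1 : ι → ℚ) t * g t = g t₀ := by
  simp [Pi.single_apply]

/-- Every real solution of a homogeneous rational linear system is a real linear
combination of rational solutions. -/
lemma spanRat {ι : Type*} [Fintype ι] [DecidableEq ι] :
    ∀ (m : ℕ) (x : ι → Fin m → ℚ) (w : ι → ℝ),
      (∀ k, ∑ t, w t * (x t k : ℝ) = 0) →
      w ∈ Submodule.span ℝ (qr '' {q : ι → ℚ | ∀ k, ∑ t, q t * x t k = 0}) := by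
  intro m
  induction m with
  | zero =>
    intro x w _
    have hset : {q : ι → ℚ | ∀ k : Fin 0, ∑ t, q t * x t k = 0} = Set.univ := by
      ext q; simp
    rw [hset]
    have hw : w = ∑ t, w t • qr (Pi.single t (1:ℚ)) := by
      funext t'
      rw [Finset.sum_apply]
      simp [qr, Pi.single_apply, apply_ite (fun q : ℚ => (q:ℝ)), mul_ite,
        Finset.sum_ite_eq]
    rw [hw]
    exact Submodule.sum_mem _ fun t _ =>
      Submodule.smul_mem _ _ (Submodule.subset_span ⟨_, Set.mem_univ _, rfl⟩)
  | succ m ih =>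
    intro x w hw
    by_cases hz : ∀ t, x t (Fin.last m) = 0
    · set y : ι → Fin m → ℚ := fun t j => x t (Fin.castSucc j) with hy
      have hw' : ∀ k, ∑ t, w t * (y t k : ℝ) = 0 := fun k => hw (Fin.castSucc k)
      refine Submodule.span_mono (Set.image_mono ?_) (ih y w hw')
      intro q hq k
      induction k using Fin.lastCases with
      | last => simp [hz]
      | cast j => exact hq j
    · push_neg at hz
      obtain ⟨t₀, hc⟩ := hz
      set c : ℚ := x t₀ (Fin.last m) with hcdef
      set z : ι → Fin m → ℚ := fun t j =>
        x t (Fin.castSucc j) - (x t (Fin.last m) / c) * x t₀ (Fin.castSucc j) with hzdef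
      have hwz : ∀ j, ∑ t, w t * (z t j : ℝ) = 0 := by
        intro j
        have hterm : ∀ t : ι, w t * (z t j : ℝ)
            = w t * (x t (Fin.castSucc j) : ℝ)
              - (w t * (x t (Fin.last m) : ℝ))
                * ((x t₀ (Fin.castSucc j) : ℝ) / (c : ℝ)) := by
          intro t
          simp only [hzdef]
          push_cast
          ring
        rw [Finset.sum_congr rfl fun t _ => hterm t, Finset.sum_sub_distrib,
          ← Finset.sum_mul, hw (Fin.castSucc j), hw (Fin.last m)]
        ring
      have hspan := ih z w hwz
      -- the linear functional and the correction map
      set δq : ι → ℚ := Pi.single t₀ 1 with hδq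
      have hcR : (c : ℝ) ≠ 0 := by exact_mod_cast hc
      set f : (ι → ℝ) →ₗ[ℝ] ℝ :=
        { toFun := fun v => (∑ t, v t * (x t (Fin.last m) : ℝ)) / (c : ℝ)
          map_add' := by
            intro u v
            simp only [Pi.add_apply]
            rw [← add_div]
            congr 1
            rw [← Finset.sum_add_distrib]
            exact Finset.sum_congr rfl fun t _ => by ring
          map_smul' := by
            intro a v
            simp only [Pi.smul_apply, smul_eq_mul, RingHom.id_apply]
            rw [← mul_div_assoc, Finset.mul_sum]
            congr 1
            exact Finset.sum_congr rfl fun t _ => by ring } with hf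
      set Φ : (ι → ℝ) →ₗ[ℝ] (ι → ℝ) := LinearMap.id - f.smulRight (qr δq) with hΦ
      have hΦw : Φ w = w := by
        have hfw : f w = 0 := by
          simp only [hf, LinearMap.coe_mk, AddHom.coe_mk]
          rw [hw (Fin.last m), zero_div]
        simp [hΦ, hfw]
      -- the rational correction
      have key : ∀ q : ι → ℚ, (∀ j, ∑ t, q t * z t j = 0) →
          Φ (qr q) ∈ qr '' {q : ι → ℚ | ∀ k, ∑ t, q t * x t k = 0} := by
        intro q hq
        set S : ℚ := ∑ t, q t * x t (Fin.last m) with hS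
        refine ⟨q - (S / c) • δq, ?_, ?_⟩
        · intro k
          have expand : ∑ t, (q - (S / c) • δq) t * x t k
              = (∑ t, q t * x t k) - (S / c) * x t₀ k := by
            have : ∀ t : ι, (q - (S / c) • δq) t * x t k
                = q t * x t k - (S / c) * ((Pi.single t₀ 1 : ι → ℚ) t * x t k) := by
              intro t
              simp only [Pi.sub_apply, Pi.smul_apply, smul_eq_mul, hδq]
              ring
            rw [Finset.sum_congr rfl fun t _ => this t, Finset.sum_sub_distrib,
              ← Finset.mul_sum, sum_single_mul]
          rw [expand]
          induction k using Fin.lastCases with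
          | last =>
            rw [← hS, ← hcdef]
            field_simp
            ring
          | cast j =>
            have hqj := hq j
            have expand2 : ∑ t, q t * z t j
                = (∑ t, q t * x t (Fin.castSucc j)) - (S / c) * x t₀ (Fin.castSucc j) := by
              have : ∀ t : ι, q t * z t j
                  = q t * x t (Fin.castSucc j)
                    - (q t * x t (Fin.last m)) * (x t₀ (Fin.castSucc j) / c) := by
                intro t; simp only [hzdef]; ring
              rw [Finset.sum_congr rfl fun t _ => this t, Finset.sum_sub_distrib,
                ← Finset.sum_mul, ← hS]
              ring
            rw [expand2] at hqj
            linarith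
        · -- qr (q - (S/c) • δq) = Φ (qr q)
          have hfq : f (qr q) = ((S / c : ℚ) : ℝ) := by
            simp only [hf, LinearMap.coe_mk, AddHom.coe_mk, hS, qr]
            push_cast
            ring
          funext t
          simp only [hΦ, LinearMap.sub_apply, LinearMap.id_apply, LinearMap.smulRight_apply,
            Pi.sub_apply, Pi.smul_apply, smul_eq_mul, qr, hfq]
          push_cast
          ring
      have hmap : w ∈ Submodule.map Φ
          (Submodule.span ℝ (qr '' {q : ι → ℚ | ∀ j, ∑ t, q t * z t j = 0})) :=
        ⟨w, hspan, hΦw⟩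
      rw [Submodule.map_span] at hmap
      refine Submodule.span_le.2 ?_ hmap
      rintro _ ⟨_, ⟨q, hqZ, rfl⟩, rfl⟩
      exact Submodule.subset_span (key q hqZ)

end AuxSpan


/-- If every element of a finite set C ⊆ ℤ^s is strictly below 0 for the extension
of an admissible order, then some strictly positive integer weight vector w has
negative dot product with every element of C. -/
theorem stmt3 {s : ℕ} (r : (Fin s → ℕ) → (Fin s → ℕ) → Prop)
    (hr : IsAdmissibleOrder r) (C : Finset (Fin s → ℤ))
    (hC : ∀ c ∈ C, extOrder r c 0 ∧ c ≠ 0) :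
    ∃ w : Fin s → ℕ, (∀ i, 0 < w i) ∧ ∀ c ∈ C, ∑ i, (w i : ℤ) * c i < 0 := by
  classical
  -- the enlarged set C' = C ∪ {-e_i}
  set negE : Fin s → (Fin s → ℤ) := fun i => -Pi.single i 1 with hnegE
  set C' : Finset (Fin s → ℤ) := C ∪ Finset.image negE Finset.univ with hC'
  have hSN : ∀ c ∈ C', AuxOrd.SN r c := by
    intro c hc
    rcases Finset.mem_union.1 hc with hc | hc
    · refine ⟨(hC c hc).1, fun hcon => (hC c hc).2 ?_⟩
      exact AuxOrd.ext_antisymm hr (hC c hc).1 hcon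
    · obtain ⟨i, _, rfl⟩ := Finset.mem_image.1 hc
      constructor
      · refine ⟨0, Pi.single i 1, Pi.single i 1, fun j => ?_, fun j => ?_, hr.2.2 _⟩
        · simp [hnegE, Pi.single_apply, apply_ite (fun n : ℕ => (n : ℤ))]
        · simp [Pi.single_apply, apply_ite (fun n : ℕ => (n : ℤ))]
      · intro hcon
        have h0 := AuxOrd.ext_antisymm hr hcon
          ((⟨0, Pi.single i 1, Pi.single i 1, fun j => by
            simp [hnegE, Pi.single_apply, apply_ite (fun n : ℕ => (n : ℤ))], fun j => by
            simp [Pi.single_apply, apply_ite (fun n : ℕ => (n : ℤ))], hr.2.2 _⟩ :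
              extOrder r (negE i) 0))
        have := congrFun h0 i
        simp [hnegE, Pi.single_apply] at this
  -- cast to ℝ
  set cast0 : (Fin s → ℤ) → (Fin s → ℝ) := fun c i => (c i : ℝ) with hcast0
  have hinj : Function.Injective cast0 := fun a b h => funext fun i => by
    have := congrFun h i
    simpa [hcast0] using this
  set T : Finset (Fin s → ℝ) := C'.image cast0 with hT
  -- 0 is not in the convex hull of T
  have hhull : (0 : Fin s → ℝ) ∉ convexHull ℝ (T : Set (Fin s → ℝ)) := by
    intro h0
    rw [Finset.convexHull_eq] at h0
    obtain ⟨w0, hw0pos, hw0sum, hw0cm⟩ := h0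
    rw [Finset.centerMass_eq_of_sum_1 _ _ hw0sum] at hw0cm
    set ω : (Fin s → ℤ) → ℝ := fun c => w0 (cast0 c) with hω
    have hsum : ∑ c ∈ C', ω c = 1 := by
      rw [← hw0sum, hT, Finset.sum_image (fun a _ b _ h => hinj h)]
    have hcomb : ∀ k, ∑ c ∈ C', ω c * (c k : ℝ) = 0 := by
      intro k
      have h1 := congrFun hw0cm k
      rw [Finset.sum_apply] at h1
      simp only [Pi.smul_apply, id, smul_eq_mul] at h1
      rw [hT, Finset.sum_image (fun a _ b _ h => hinj h)] at h1
      exact h1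
    -- the support
    set T₀ : Finset (Fin s → ℤ) := C'.filter (fun c => ω c ≠ 0) with hT₀
    have hT₀ne : T₀.Nonempty := by
      by_contra hne
      rw [Finset.not_nonempty_iff_eq_empty, Finset.filter_eq_empty_iff] at hne
      simp only [not_not] at hne
      have : ∑ c ∈ C', ω c = 0 := Finset.sum_eq_zero fun c hc => hne hc
      rw [hsum] at this; norm_num at this
    haveI : Nonempty {c // c ∈ T₀} := Finset.Nonempty.coe_sort hT₀ne
    set X : {c // c ∈ T₀} → Fin s → ℚ := fun t k => ((t.1 k : ℚ)) with hX
    set W : {c // c ∈ T₀} → ℝ := fun t => ω t.1 with hW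
    have hWpos : ∀ t, 0 < W t := by
      rintro ⟨c, hc⟩
      rw [hT₀, Finset.mem_filter] at hc
      have h1 : 0 ≤ ω c := hw0pos _ (by
        rw [hT]; exact Finset.mem_image_of_mem _ hc.1)
      exact lt_of_le_of_ne h1 (Ne.symm hc.2)
    have hsys : ∀ k, ∑ t, W t * (X t k : ℝ) = 0 := by
      intro k
      have h1 : ∑ c ∈ C', ω c * (c k : ℝ) = ∑ c ∈ T₀, ω c * (c k : ℝ) :=
        (Finset.sum_filter_of_ne (fun c _ h => by
          intro hω0; rw [hω0] at h; simp at h)).symm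
      have h2 : ∑ c ∈ T₀, ω c * (c k : ℝ) = ∑ t, W t * (X t k : ℝ) := by
        rw [Finset.univ_eq_attach, ← Finset.sum_attach T₀ (fun c => ω c * (c k : ℝ))]
        exact Finset.sum_congr rfl fun t _ => by
          simp [hW, hX]
      rw [← h2, ← h1, hcomb k]
    have hspan := AuxSpan.spanRat s X W hsys
    rw [Submodule.mem_span_set'] at hspan
    obtain ⟨n, f, g, hrep⟩ := hspan
    have hgq : ∀ i, ∃ q : {c // c ∈ T₀} → ℚ,
        (∀ k, ∑ t, q t * X t k = 0) ∧ AuxSpan.qr q = (g i : {c // c ∈ T₀} → ℝ) := by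
      intro i
      obtain ⟨q, hq1, hq2⟩ := (g i).2
      exact ⟨q, hq1, hq2⟩
    choose Q hQ1 hQ2 using hgq
    have hWrep : ∀ t, W t = ∑ i, f i * (Q i t : ℝ) := by
      intro t
      have := congrFun hrep t
      rw [Finset.sum_apply] at this
      rw [← this]
      exact (Finset.sum_congr rfl fun i _ => by
        rw [← hQ2 i]; simp [AuxSpan.qr]).symm
    -- n is positive
    have hn : n ≠ 0 := by
      intro h0
      obtain ⟨t⟩ := (inferInstance : Nonempty {c // c ∈ T₀})
      have := hWrep t
      subst h0
      simp at this
      exact (hWpos t).ne' this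
    -- choose rational approximations
    set B : {c // c ∈ T₀} → ℝ := fun t => (∑ i, |(Q i t : ℝ)|) + n with hB
    have hBpos : ∀ t, 0 < B t := by
      intro t
      have h1 : 0 ≤ ∑ i, |(Q i t : ℝ)| := Finset.sum_nonneg fun i _ => abs_nonneg _
      have h2 : (0:ℝ) < n := by
        have : 0 < n := Nat.pos_of_ne_zero hn
        exact_mod_cast this
      simp only [hB]; linarith
    set δ : ℝ := Finset.univ.inf' Finset.univ_nonempty (fun t => W t / B t) with hδ
    have hδpos : 0 < δ := by
      rw [hδ, Finset.lt_inf'_iff]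
      exact fun t _ => div_pos (hWpos t) (hBpos t)
    have hδle : ∀ t, δ ≤ W t / B t := fun t =>
      Finset.inf'_le _ (Finset.mem_univ t)
    have hρex : ∀ i : Fin n, ∃ ρ : ℚ, f i - δ < ρ ∧ (ρ:ℝ) < f i := by
      intro i
      obtain ⟨ρ, h1, h2⟩ := exists_rat_btwn (show f i - δ < f i by linarith)
      exact ⟨ρ, h1, h2⟩
    choose ρ hρ1 hρ2 using hρex
    set qs : {c // c ∈ T₀} → ℚ := fun t => ∑ i, ρ i * Q i t with hqs
    have hqspos : ∀ t, 0 < qs t := by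
      intro t
      have hcast : (qs t : ℝ) = ∑ i, (ρ i : ℝ) * (Q i t : ℝ) := by
        rw [hqs]; push_cast; rfl
      rw [← Rat.cast_pos (K := ℝ), hcast]
      have hsplit : ∑ i, (ρ i : ℝ) * (Q i t : ℝ)
          = W t + ∑ i, ((ρ i : ℝ) - f i) * (Q i t : ℝ) := by
        rw [hWrep t, ← Finset.sum_add_distrib]
        exact Finset.sum_congr rfl fun i _ => by ring
      rw [hsplit]
      have hbound : |∑ i, ((ρ i : ℝ) - f i) * (Q i t : ℝ)| ≤ δ * (∑ i, |(Q i t : ℝ)|) := by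
        calc |∑ i, ((ρ i : ℝ) - f i) * (Q i t : ℝ)|
            ≤ ∑ i, |((ρ i : ℝ) - f i) * (Q i t : ℝ)| := Finset.abs_sum_le_sum_abs _ _
          _ ≤ ∑ i, δ * |(Q i t : ℝ)| := by
              refine Finset.sum_le_sum fun i _ => ?_
              rw [abs_mul]
              refine mul_le_mul_of_nonneg_right ?_ (abs_nonneg _)
              rw [abs_le]
              constructor <;> [linarith [hρ1 i]; linarith [hρ2 i]]
          _ = δ * (∑ i, |(Q i t : ℝ)|) := by rw [Finset.mul_sum]
      have hδB : δ * B t ≤ W t := by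
        have := hδle t
        rw [le_div_iff₀ (hBpos t)] at this
        linarith
      have hnpos : (1:ℝ) ≤ n := by
        have : 1 ≤ n := Nat.one_le_iff_ne_zero.2 hn
        exact_mod_cast this
      have h1 : δ * (∑ i, |(Q i t : ℝ)|) ≤ δ * B t - δ := by
        simp only [hB]
        nlinarith [mul_nonneg hδpos.le (sub_nonneg.mpr hnpos)]
      have habs := abs_le.1 hbound
      linarith [habs.1]
    have hqssol : ∀ k, ∑ t, qs t * X t k = 0 := by
      intro k
      simp only [hqs]
      calc ∑ t, (∑ i, ρ i * Q i t) * X t k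
          = ∑ t, ∑ i, ρ i * (Q i t * X t k) := by
            refine Finset.sum_congr rfl fun t _ => ?_
            rw [Finset.sum_mul]
            exact Finset.sum_congr rfl fun i _ => by ring
        _ = ∑ i, ρ i * ∑ t, Q i t * X t k := by
            rw [Finset.sum_comm]
            exact Finset.sum_congr rfl fun i _ => by rw [Finset.mul_sum]
        _ = 0 := Finset.sum_eq_zero fun i _ => by rw [hQ1 i k, mul_zero]
    -- clear denominators
    set D : ℕ := ∏ t, (qs t).den with hD
    have hDpos : 0 < D := Finset.prod_pos fun t _ => (qs t).pos
    set nn : {c // c ∈ T₀} → ℕ := fun t => (D / (qs t).den) * (qs t).num.toNat with hnn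
    have hnnval : ∀ t, (nn t : ℚ) = D * qs t := by
      intro t
      have hdvd : (qs t).den ∣ D := Finset.dvd_prod_of_mem _ (Finset.mem_univ t)
      have hden : ((qs t).den : ℚ) ≠ 0 := by exact_mod_cast (qs t).den_nz
      have hnum : ((qs t).num.toNat : ℚ) = ((qs t).num : ℚ) := by
        have : 0 < (qs t).num := Rat.num_pos.2 (hqspos t)
        exact_mod_cast Int.toNat_of_nonneg this.le
      simp only [hnn]
      push_cast [Nat.cast_div hdvd hden, hnum]
      conv_rhs => rw [← Rat.num_div_den (qs t)]
      ring
    have hnnpos : ∀ t, 0 < nn t := by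
      intro t
      have h1 : (0:ℚ) < D * qs t := by
        apply mul_pos _ (hqspos t)
        exact_mod_cast hDpos
      rw [← hnnval t] at h1
      exact_mod_cast h1
    -- the natural-number relation on T₀
    set m : (Fin s → ℤ) → ℕ := fun c => if h : c ∈ T₀ then nn ⟨c, h⟩ else 0 with hm
    have hrel : ∑ c ∈ T₀, m c • c = (0 : Fin s → ℤ) := by
      funext k
      have hQcast : ((∑ c ∈ T₀, m c • c) k : ℚ) = ∑ c ∈ T₀, (m c : ℚ) * ((c k : ℚ)) := by
        rw [Finset.sum_apply]
        push_cast
        exact Finset.sum_congr rfl fun c _ => by simp [mul_comm]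
      have h2 : ∑ c ∈ T₀, (m c : ℚ) * ((c k : ℚ)) = ∑ t : {c // c ∈ T₀}, (nn t : ℚ) * X t k := by
        rw [Finset.univ_eq_attach, ← Finset.sum_attach T₀ (fun c => (m c : ℚ) * ((c k : ℚ)))]
        refine Finset.sum_congr rfl fun t _ => ?_
        simp [hm, hX, t.2]
      have h3 : ∑ t : {c // c ∈ T₀}, (nn t : ℚ) * X t k = 0 := by
        calc ∑ t : {c // c ∈ T₀}, (nn t : ℚ) * X t k
            = (D:ℚ) * ∑ t, qs t * X t k := by
              rw [Finset.mul_sum]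
              exact Finset.sum_congr rfl fun t _ => by rw [hnnval t]; ring
          _ = 0 := by rw [hqssol k, mul_zero]
        
      have : ((∑ c ∈ T₀, m c • c) k : ℚ) = 0 := by rw [hQcast, h2, h3]
      exact_mod_cast this
    -- contradiction with the order
    obtain ⟨c₀, hc₀⟩ := hT₀ne
    have hsn := AuxOrd.sn_sum hr T₀ id m
      (fun c hc => hSN c (Finset.mem_of_mem_filter c hc))
      ⟨c₀, hc₀, by simp [hm, hc₀]; exact (hnnpos ⟨c₀, hc₀⟩).ne'⟩
    simp only [id] at hsn
    rw [hrel] at hsn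
    exact AuxOrd.not_sn_zero hr hsn
  -- separating functional
  obtain ⟨φ, u, hu0, hub⟩ := geometric_hahn_banach_point_closed
    (convex_convexHull ℝ (T : Set (Fin s → ℝ))) (T.finite_toSet.isClosed_convexHull ℝ) hhull
  have hu : 0 < u := by simpa using hu0
  have hφC' : ∀ c ∈ C', u < φ (cast0 c) := fun c h =>
    hub _ (subset_convexHull _ _ (Finset.mem_coe.2 (Finset.mem_image_of_mem _ h)))
  set E : Fin s → (Fin s → ℝ) := fun i j => if i = j then 1 else 0 with hE
  have hexp : ∀ c : Fin s → ℤ, φ (cast0 c) = ∑ i, (c i : ℝ) * φ (E i) := by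
    intro c
    have h1 : cast0 c = ∑ i, (c i : ℝ) • E i := by
      rw [hE]; exact pi_eq_sum_univ (cast0 c)
    rw [h1, map_sum]
    exact Finset.sum_congr rfl fun i _ => by rw [map_smul]; rfl
  set v : Fin s → ℝ := fun i => -φ (E i) with hv
  have hvu : ∀ i, u < v i := by
    intro i
    have h1 := hφC' (negE i) (Finset.mem_union_right _
      (Finset.mem_image_of_mem _ (Finset.mem_univ i)))
    rw [hexp] at h1
    have h2 : ∑ j, ((negE i j : ℝ)) * φ (E j) = -φ (E i) := by
      have : ∀ j, ((negE i j : ℝ)) * φ (E j)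
          = (if j = i then -φ (E j) else 0) := by
        intro j
        simp only [hnegE, Pi.neg_apply, Pi.single_apply]
        split <;> simp_all
      rw [Finset.sum_congr rfl fun j _ => this j, Finset.sum_ite_eq' Finset.univ i
        (fun j => -φ (E j))]
      simp
    rw [h2] at h1
    simp only [hv]
    exact h1
  have hvc : ∀ c ∈ C, ∑ i, v i * (c i : ℝ) < -u := by
    intro c hc
    have h1 := hφC' c (Finset.mem_union_left _ hc)
    rw [hexp] at h1
    have h2 : ∑ i, (c i : ℝ) * φ (E i) = -∑ i, v i * (c i : ℝ) := by
      rw [← Finset.sum_neg_distrib]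
      exact Finset.sum_congr rfl fun i _ => by rw [hv]; ring
    rw [h2] at h1
    linarith
  -- rounding
  set M : ℝ := ∑ c ∈ C, ∑ i, |(c i : ℝ)| with hM
  have hM0 : 0 ≤ M := Finset.sum_nonneg fun c _ =>
    Finset.sum_nonneg fun i _ => abs_nonneg _
  set N : ℕ := ⌈M / u⌉₊ + 1 with hN
  have hNu : M < N * u := by
    have h1 : M / u ≤ (⌈M / u⌉₊ : ℝ) := Nat.le_ceil _
    have h2 : (N:ℝ) = (⌈M / u⌉₊ : ℝ) + 1 := by rw [hN]; push_cast; ring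
    have h3 : M / u * u = M := div_mul_cancel₀ _ hu.ne'
    nlinarith
  have hN1 : (1:ℝ) ≤ N := by
    rw [hN]; push_cast; linarith [Nat.cast_nonneg (α := ℝ) ⌈M / u⌉₊]
  refine ⟨fun i => (⌈(N:ℝ) * v i⌉).toNat, fun i => ?_, fun c hc => ?_⟩
  · have hpos : (0:ℝ) < (N:ℝ) * v i := by nlinarith [hvu i, hu]
    have h1 := Int.ceil_pos.2 hpos
    show 0 < (⌈(N:ℝ) * v i⌉).toNat
    omega
  · -- the dot product is negative
    have hwR : ∀ i, ((((⌈(N:ℝ) * v i⌉).toNat : ℕ) : ℝ)) = ((⌈(N:ℝ) * v i⌉ : ℤ) : ℝ) := by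
      intro i
      have hpos : (0:ℝ) < (N:ℝ) * v i := by nlinarith [hvu i, hu]
      have h1 : (0:ℤ) ≤ ⌈(N:ℝ) * v i⌉ := (Int.ceil_pos.2 hpos).le
      exact_mod_cast congrArg (fun z : ℤ => (z : ℝ)) (Int.toNat_of_nonneg h1)
    have hreal : ∑ i, (((⌈(N:ℝ) * v i⌉).toNat : ℕ) : ℝ) * (c i : ℝ) < 0 := by
      have hsplit : ∑ i, (((⌈(N:ℝ) * v i⌉).toNat : ℕ) : ℝ) * (c i : ℝ)
          = (N:ℝ) * (∑ i, v i * (c i : ℝ))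
            + ∑ i, ((((⌈(N:ℝ) * v i⌉).toNat : ℕ) : ℝ) - (N:ℝ) * v i) * (c i : ℝ) := by
        rw [Finset.mul_sum, ← Finset.sum_add_distrib]
        exact Finset.sum_congr rfl fun i _ => by ring
      have herr : ∑ i, ((((⌈(N:ℝ) * v i⌉).toNat : ℕ) : ℝ) - (N:ℝ) * v i) * (c i : ℝ)
          ≤ ∑ i, |(c i : ℝ)| := by
        refine Finset.sum_le_sum fun i _ => ?_
        have h1 : (N:ℝ) * v i ≤ (((⌈(N:ℝ) * v i⌉).toNat : ℕ) : ℝ) := by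
          rw [hwR i]; exact Int.le_ceil _
        have h2 : (((⌈(N:ℝ) * v i⌉).toNat : ℕ) : ℝ) < (N:ℝ) * v i + 1 := by
          rw [hwR i]; exact Int.ceil_lt_add_one _
        calc ((((⌈(N:ℝ) * v i⌉).toNat : ℕ) : ℝ) - (N:ℝ) * v i) * (c i : ℝ)
            ≤ |((((⌈(N:ℝ) * v i⌉).toNat : ℕ) : ℝ) - (N:ℝ) * v i) * (c i : ℝ)| := le_abs_self _
          _ = |(((⌈(N:ℝ) * v i⌉).toNat : ℕ) : ℝ) - (N:ℝ) * v i| * |(c i : ℝ)| := abs_mul _ _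
          _ ≤ 1 * |(c i : ℝ)| := by
              refine mul_le_mul_of_nonneg_right ?_ (abs_nonneg _)
              rw [abs_le]; constructor <;> linarith
          _ = |(c i : ℝ)| := one_mul _
      have hMc : ∑ i, |(c i : ℝ)| ≤ M := by
        rw [hM]
        exact Finset.single_le_sum (f := fun c => ∑ i, |(c i : ℝ)|)
          (fun c _ => Finset.sum_nonneg fun i _ => abs_nonneg _) hc
      have hvcc := hvc c hc
      have hNpos : (0:ℝ) < N := by linarith
      have h5 : (N:ℝ) * (∑ i, v i * (c i : ℝ)) < (N:ℝ) * (-u) :=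
        mul_lt_mul_of_pos_left hvcc hNpos
      rw [hsplit]
      have : (N:ℝ) * (-u) = -((N:ℝ) * u) := by ring
      nlinarith
    have hcast : ((∑ i, ((((⌈(N:ℝ) * v i⌉).toNat : ℕ) : ℤ)) * c i : ℤ) : ℝ)
        = ∑ i, (((⌈(N:ℝ) * v i⌉).toNat : ℕ) : ℝ) * (c i : ℝ) := by
      push_cast
      rfl
    have : ((∑ i, ((((⌈(N:ℝ) * v i⌉).toNat : ℕ) : ℤ)) * c i : ℤ) : ℝ) < 0 := by
      rw [hcast]; exact hreal
    exact_mod_cast this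
end

section
/- Let Λ be a field k and consider R with elements x_1, …, x_s such that {x^α : α ∈ ℕ^s} is a k-basis of R and x_j x_i = q_{ji} x_i x_j + Σ_{α ∈ Γ_{ji}} c_α x^α for i < j, where every α ∈ Γ_{ji} satisfies α ≺' ε_i + ε_j for an admissible order ⪯' on ℕ^s and q_{ji} ∈ k^×. Then the filtration H_β(R) = span_k { x^γ : γ ⪯' β } satisfies H_β(R) · H_δ(R) ⊆ H_{β+δ}(R), i.e., it is an (ℕ^s, ⪯')-filtration of R. -/
/-- The standard (ordered) monomial x^γ = x_1^{γ_1} ⋯ x_s^{γ_s}. -/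
def stdMono {R : Type*} [Ring R] {s : ℕ} (x : Fin s → R) (γ : Fin s → ℕ) : R :=
  (List.ofFn fun i => x i ^ γ i).prod

/-- The i-th standard basis vector ε_i of ℕ^s. -/
def eps {s : ℕ} (i : Fin s) : Fin s → ℕ := fun j => if j = i then 1 else 0

namespace Stmt18Aux

variable {s : ℕ}

/-- exponent vector of a word -/
def expo (w : List (Fin s)) : Fin s → ℕ := fun i => w.count i

/-- inversion count -/
def invc : List (Fin s) → ℕ
  | [] => 0
  | a :: t => (t.countP fun b => decide (b < a)) + invc t

/-- the sorted word of a monomial -/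
def word (γ : Fin s → ℕ) : List (Fin s) :=
  (List.ofFn fun i => List.replicate (γ i) i).flatten

lemma expo_append (u v : List (Fin s)) : expo (u ++ v) = expo u + expo v := by
  funext i; simp [expo, List.count_append]

lemma expo_cons (a : Fin s) (t : List (Fin s)) : expo (a :: t) = eps a + expo t := by
  funext i
  by_cases h : i = a
  · subst h; simp [expo, eps, List.count_cons]; omega
  · simp [expo, eps, List.count_cons, h, Ne.symm h]

lemma expo_word (γ : Fin s → ℕ) : expo (word γ) = γ := by
  funext i
  simp only [expo, word, List.count_flatten, List.map_ofFn]
  rw [List.sum_ofFn]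
  simp [Function.comp, List.count_replicate]

lemma expo_perm {u v : List (Fin s)} (h : u.Perm v) : expo u = expo v := by
  funext i; exact h.count_eq i

lemma word_sorted (γ : Fin s → ℕ) : List.Pairwise (· ≤ ·) (word γ) := by
  rw [word, List.pairwise_flatten]
  constructor
  · intro l hl
    simp only [List.mem_ofFn] at hl
    obtain ⟨i, rfl⟩ := hl
    exact List.pairwise_replicate.2 (Or.inr le_rfl)
  · rw [List.pairwise_ofFn]
    intro i j hij a ha b hb
    rw [List.eq_of_mem_replicate ha, List.eq_of_mem_replicate hb]
    exact hij.le

lemma sorted_eq_word {w : List (Fin s)} (h : List.Pairwise (· ≤ ·) w) : w = word (expo w) := by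
  apply List.Perm.eq_of_pairwise' h (word_sorted _)
  rw [List.perm_iff_count]
  intro a
  have := expo_word (expo w)
  have h2 : expo (word (expo w)) a = expo w a := by rw [this]
  exact h2.symm

variable {R : Type*} [Ring R] (x : Fin s → R)

/-- product of a word -/
def pw (w : List (Fin s)) : R := (w.map x).prod

lemma pw_append (u v : List (Fin s)) : pw x (u ++ v) = pw x u * pw x v := by
  simp [pw]

lemma pw_cons (a : Fin s) (t : List (Fin s)) : pw x (a :: t) = x a * pw x t := by
  simp [pw]

lemma pw_word (γ : Fin s → ℕ) : pw x (word γ) = stdMono x γ := by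
  simp only [pw, word, List.map_flatten, List.map_ofFn, List.prod_flatten, stdMono]
  have : (List.prod ∘ List.map x ∘ fun i => List.replicate (γ i) i) = fun i => x i ^ γ i := by
    funext i
    simp [Function.comp, List.prod_replicate]
  rw [this]

lemma pw_sorted {w : List (Fin s)} (h : List.Pairwise (· ≤ ·) w) :
    pw x w = stdMono x (expo w) := by
  rw [sorted_eq_word h, pw_word, expo_word]

/-- inversion count facts -/
lemma invc_append_perm {l₁ l₂ : List (Fin s)} (h : l₁.Perm l₂) (u : List (Fin s)) :
    invc (u ++ l₁) + invc l₂ = invc (u ++ l₂) + invc l₁ := by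
  induction u with
  | nil => simp [Nat.add_comm]
  | cons a t ih =>
      simp only [List.cons_append, invc]
      have hc : ∀ p : Fin s → Bool, List.countP p l₁ = List.countP p l₂ :=
        fun p => h.countP_eq p
      rw [List.countP_append, List.countP_append, hc]
      omega

lemma invc_swap (i j : Fin s) (v : List (Fin s)) (hij : i < j) :
    invc (i :: j :: v) + 1 = invc (j :: i :: v) := by
  simp only [invc, List.countP_cons]
  simp [hij, not_lt_of_gt hij]
  omega

/-- decomposition of a non-sorted list -/
lemma exists_desc {w : List (Fin s)} (h : ¬ List.Pairwise (· ≤ ·) w) :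
    ∃ u i j v, w = u ++ j :: i :: v ∧ i < j := by
  induction w with
  | nil => simp at h
  | cons a t ih =>
      by_cases ht : List.Pairwise (· ≤ ·) t
      · -- then a must be > head of t
        match t, ht with
        | [], _ => simp at h
        | b :: t', ht =>
          by_cases hab : a ≤ b
          · exfalso
            apply h
            refine List.pairwise_cons.mpr ⟨?_, ht⟩
            intro c hc
            rcases List.mem_cons.mp hc with rfl | hc
            · exact hab
            · exact le_trans hab ((List.rel_of_pairwise_cons ht) hc)

          · exact ⟨[], b, a, t', by simp, lt_of_not_ge hab⟩
      · obtain ⟨u, i, j, v, rfl, hij⟩ := ih ht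
        exact ⟨a :: u, i, j, v, by simp, hij⟩

end Stmt18Aux

namespace Stmt18Aux

lemma slt_wf {s : ℕ} {rel : (Fin s → ℕ) → (Fin s → ℕ) → Prop}
    (hrel : IsAdmissibleOrder rel) :
    WellFounded (fun a b => rel a b ∧ a ≠ b) := by
  obtain ⟨hlin, hadd, hzero⟩ := hrel
  haveI := hlin
  haveI : IsIrrefl (Fin s → ℕ) (fun a b => rel a b ∧ a ≠ b) := ⟨fun _ h => h.2 rfl⟩
  haveI : IsTrans (Fin s → ℕ) (fun a b => rel a b ∧ a ≠ b) :=
    ⟨fun a b c h1 h2 => ⟨trans_of rel h1.1 h2.1,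
      fun he => h1.2 (antisymm h1.1 (he ▸ h2.1))⟩⟩
  haveI : IsStrictOrder (Fin s → ℕ) (fun a b => rel a b ∧ a ≠ b) := { }
  rw [RelEmbedding.wellFounded_iff_isEmpty]
  constructor
  intro f
  have hpwo : (Set.univ : Set (Fin s → ℕ)).IsPWO := by
    have h : ∀ _i : Fin s, IsWellOrder ℕ (· < ·) := fun _ => inferInstance
    exact Set.isPWO_of_wellQuasiOrderedLE _
  obtain ⟨m, n, hmn, hle⟩ := Set.PartiallyWellOrderedOn.exists_lt hpwo (f := fun n => f n) (fun n => Set.mem_univ _)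
  have hdesc : rel (f n) (f m) ∧ f n ≠ f m := f.map_rel_iff.2 hmn
  have hup : rel (f m) (f n) := by
    have h0 : rel 0 (f n - f m) := hzero _
    have h1 := hadd 0 (f n - f m) (f m) h0
    have h2 : (0 : Fin s → ℕ) + f m = f m := by funext i; simp
    have h3 : (f n - f m) + f m = f n := by
      funext i
      have h4 : f m i ≤ f n i := hle i
      simp only [Pi.add_apply, Pi.sub_apply]
      omega
    rwa [h2, h3] at h1
  exact hdesc.2 (antisymm hdesc.1 hup)

lemma key {k : Type*} [Field k] {R : Type*} [Ring R] [Algebra k R]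
    {s : ℕ} (x : Fin s → R)
    (rel : (Fin s → ℕ) → (Fin s → ℕ) → Prop) (hrel : IsAdmissibleOrder rel)
    (q : Fin s → Fin s → k)
    (hrelations : ∀ i j : Fin s, i < j → ∃ Γ : Finset (Fin s → ℕ),
      (∀ α ∈ Γ, rel α (eps i + eps j) ∧ α ≠ eps i + eps j) ∧
      ∃ c : (Fin s → ℕ) → k,
        x j * x i = q j i • (x i * x j) + ∑ α ∈ Γ, c α • stdMono x α) :
    ∀ w : List (Fin s),
      pw x w ∈ Submodule.span k {z : R | ∃ μ, rel μ (expo w) ∧ z = stdMono x μ} := by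
  obtain ⟨hlin, hadd, hzero⟩ := hrel
  haveI := hlin
  have hrefl : ∀ a, rel a a := fun a => refl_of rel a
  have htrans : ∀ {a b c}, rel a b → rel b c → rel a c := fun h1 h2 => trans_of rel h1 h2
  have hwf : WellFounded (fun a b : Fin s → ℕ => rel a b ∧ a ≠ b) := slt_wf ⟨hlin, hadd, hzero⟩
  have hwf3 : WellFounded (InvImage (Prod.Lex (fun a b : Fin s → ℕ => rel a b ∧ a ≠ b)
      (fun m n : ℕ => m < n)) (fun w : List (Fin s) => (expo w, invc w))) :=
    InvImage.wf _ (hwf.prod_lex (Nat.lt_wfRel.wf))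
  have span_mono : ∀ {τ τ' : Fin s → ℕ}, rel τ τ' →
      Submodule.span k {z : R | ∃ μ, rel μ τ ∧ z = stdMono x μ} ≤
      Submodule.span k {z : R | ∃ μ, rel μ τ' ∧ z = stdMono x μ} := by
    intro τ τ' h
    apply Submodule.span_mono
    rintro z ⟨μ, h1, rfl⟩
    exact ⟨μ, htrans h1 h, rfl⟩
  intro w
  refine hwf3.induction
    (C := fun w => pw x w ∈ Submodule.span k {z : R | ∃ μ, rel μ (expo w) ∧ z = stdMono x μ})
    w ?_
  clear w
  intro w ih
  by_cases hs : List.Pairwise (· ≤ ·) w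
  · rw [pw_sorted x hs]
    exact Submodule.subset_span ⟨expo w, hrefl _, rfl⟩
  · obtain ⟨u, i, j, v, rfl, hij⟩ := exists_desc hs
    obtain ⟨Γ, hΓ, c, hrel_eq⟩ := hrelations i j hij
    have hpw : pw x (u ++ j :: i :: v) = pw x u * ((x j * x i) * pw x v) := by
      simp [pw_append, pw_cons, mul_assoc]
    rw [hpw, hrel_eq]
    have expand : pw x u * ((q j i • (x i * x j) + ∑ α ∈ Γ, c α • stdMono x α) * pw x v)
        = q j i • pw x (u ++ i :: j :: v) + ∑ α ∈ Γ, c α • pw x (u ++ word α ++ v) := by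
      rw [add_mul, mul_add, Finset.sum_mul, Finset.mul_sum]
      congr 1
      · simp [pw_append, pw_cons, mul_assoc, mul_smul_comm, smul_mul_assoc]
      · apply Finset.sum_congr rfl
        intro α _
        simp [pw_append, pw_word, mul_smul_comm, smul_mul_assoc, mul_assoc]
    rw [expand]
    have hperm : (i :: j :: v).Perm (j :: i :: v) := List.Perm.swap _ _ _
    apply Submodule.add_mem
    · apply Submodule.smul_mem
      have hexpo : expo (u ++ i :: j :: v) = expo (u ++ j :: i :: v) :=
        expo_perm ((hperm.append_left u).symm).symm
      have hinv : invc (u ++ i :: j :: v) < invc (u ++ j :: i :: v) := by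
        have h1 := invc_append_perm hperm u
        have h2 := invc_swap i j v hij
        omega
      have harg : InvImage (Prod.Lex (fun a b : Fin s → ℕ => rel a b ∧ a ≠ b)
          (fun m n : ℕ => m < n)) (fun w : List (Fin s) => (expo w, invc w))
          (u ++ i :: j :: v) (u ++ j :: i :: v) := by
        show Prod.Lex _ _ (expo (u ++ i :: j :: v), invc (u ++ i :: j :: v)) _
        rw [hexpo]
        exact Prod.Lex.right _ hinv
      have hmem : pw x (u ++ i :: j :: v) ∈ Submodule.span k
          {z : R | ∃ μ, rel μ (expo (u ++ i :: j :: v)) ∧ z = stdMono x μ} := ih _ harg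
      rwa [hexpo] at hmem
    · apply Submodule.sum_mem
      intro α hα
      apply Submodule.smul_mem
      obtain ⟨hα1, hα2⟩ := hΓ α hα
      have hexpo1 : expo (u ++ word α ++ v) = α + (expo u + expo v) := by
        rw [expo_append, expo_append, expo_word]
        funext t; simp [Pi.add_apply]; ring
      have hexpo2 : expo (u ++ j :: i :: v) = (eps i + eps j) + (expo u + expo v) := by
        rw [expo_append, expo_cons, expo_cons]
        funext t; simp [Pi.add_apply]; ring
      have hlt : rel (expo (u ++ word α ++ v)) (expo (u ++ j :: i :: v)) ∧
          expo (u ++ word α ++ v) ≠ expo (u ++ j :: i :: v) := by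
        rw [hexpo1, hexpo2]
        constructor
        · exact hadd _ _ _ hα1
        · intro hcontra
          exact hα2 (add_right_cancel hcontra)
      have hmem : pw x (u ++ word α ++ v) ∈ Submodule.span k
          {z : R | ∃ μ, rel μ (expo (u ++ word α ++ v)) ∧ z = stdMono x μ} :=
        ih _ (Prod.Lex.left _ _ hlt)
      exact span_mono hlt.1 hmem

end Stmt18Aux

/-- Let R be a k-algebra with k-basis the standard monomials x^α in x_1, …, x_s,
subject to relations x_j x_i = q_{ji} x_i x_j + Σ_{α ∈ Γ_{ji}} c_α x^α (i < j)
with q_{ji} ≠ 0 and each α ∈ Γ_{ji} strictly ≺'-below ε_i + ε_j for an admissible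
order ⪯' on ℕ^s.  Then H_β = span_k{ x^γ : γ ⪯' β } is an (ℕ^s, ⪯')-filtration:
H_β · H_δ ⊆ H_{β+δ}. -/
theorem stmt18 {k : Type*} [Field k] {R : Type*} [Ring R] [Algebra k R]
    {s : ℕ} (x : Fin s → R)
    (hbasis : LinearIndependent k (fun γ : Fin s → ℕ => stdMono x γ))
    (hspan : Submodule.span k (Set.range fun γ : Fin s → ℕ => stdMono x γ) = ⊤)
    (rel : (Fin s → ℕ) → (Fin s → ℕ) → Prop) (hrel : IsAdmissibleOrder rel)
    (q : Fin s → Fin s → k) (hq : ∀ i j : Fin s, i < j → q j i ≠ 0)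
    (hrelations : ∀ i j : Fin s, i < j → ∃ Γ : Finset (Fin s → ℕ),
      (∀ α ∈ Γ, rel α (eps i + eps j) ∧ α ≠ eps i + eps j) ∧
      ∃ c : (Fin s → ℕ) → k,
        x j * x i = q j i • (x i * x j) + ∑ α ∈ Γ, c α • stdMono x α) :
    ∀ β δ : Fin s → ℕ,
      ∀ a ∈ Submodule.span k {z : R | ∃ γ, rel γ β ∧ z = stdMono x γ},
      ∀ b ∈ Submodule.span k {z : R | ∃ γ, rel γ δ ∧ z = stdMono x γ},
        a * b ∈ Submodule.span k {z : R | ∃ γ, rel γ (β + δ) ∧ z = stdMono x γ} := by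
  obtain ⟨hlin, hadd, hzero⟩ := hrel
  haveI := hlin
  have htrans : ∀ {a b c}, rel a b → rel b c → rel a c := fun h1 h2 => trans_of rel h1 h2
  intro β δ a ha b hb
  have h1 : a * b ∈ Submodule.span k {z : R | ∃ γ, rel γ β ∧ z = stdMono x γ} *
      Submodule.span k {z : R | ∃ γ, rel γ δ ∧ z = stdMono x γ} :=
    Submodule.mul_mem_mul ha hb
  rw [Submodule.span_mul_span] at h1
  refine Submodule.span_le.mpr ?_ h1
  rintro z hz
  rw [Set.mem_mul] at hz
  obtain ⟨z1, hz1, z2, hz2, rfl⟩ := hz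
  obtain ⟨γ, hγ, rfl⟩ := hz1
  obtain ⟨γ', hγ', rfl⟩ := hz2
  have heq : stdMono x γ * stdMono x γ' = Stmt18Aux.pw x (Stmt18Aux.word γ ++ Stmt18Aux.word γ') := by
    rw [Stmt18Aux.pw_append, Stmt18Aux.pw_word, Stmt18Aux.pw_word]
  have hkey := Stmt18Aux.key x rel ⟨hlin, hadd, hzero⟩ q hrelations
    (Stmt18Aux.word γ ++ Stmt18Aux.word γ')
  rw [Stmt18Aux.expo_append, Stmt18Aux.expo_word, Stmt18Aux.expo_word] at hkey
  have hle : rel (γ + γ') (β + δ) := by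
    have h2 : rel (γ + γ') (β + γ') := hadd _ _ _ hγ
    have h3 : rel (β + γ') (β + δ) := by
      have := hadd γ' δ β hγ'
      rwa [add_comm γ' β, add_comm δ β] at this
    exact htrans h2 h3
  have hmono : Submodule.span k {z : R | ∃ μ, rel μ (γ + γ') ∧ z = stdMono x μ} ≤
      Submodule.span k {z : R | ∃ μ, rel μ (β + δ) ∧ z = stdMono x μ} := by
    apply Submodule.span_mono
    rintro w ⟨μ, hμ, rfl⟩
    exact ⟨μ, htrans hμ hle, rfl⟩
  show stdMono x γ * stdMono x γ' ∈ _
  rw [heq]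
  exact hmono hkey
end
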